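/- The Catalan generating function satisfies c(x)^3 = (1 - x·c(x)^2) · c'(x) as formal power series, where c' denotes the formal derivative. -/

import Mathlib

open PowerSeries

/-- The generating function of the Catalan numbers `C_k = (2k)!/(k!(k+1)!)` over `ℚ`. -/
noncomputable def catGF : PowerSeries ℚ :=
  PowerSeries.mk fun k => ((2 * k).factorial : ℚ) / ((k.factorial : ℚ) * ((k + 1).factorial : ℚ))

lemma coeff_catGF (n : ℕ) : (PowerSeries.coeff n) catGF = (catalan n : ℚ) := by
  have h := succ_mul_catalan_eq_centralBinom n
  have h2 : Nat.centralBinom n * (n.factorial * n.factorial) = (2 * n).factorial := by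
    have := Nat.choose_mul_factorial_mul_factorial (n := 2 * n) (k := n) (by omega)
    have h3 : 2 * n - n = n := by omega
    rw [h3] at this
    simpa [Nat.centralBinom, mul_assoc] using this
  have hc : ((2 * n).factorial : ℚ) = (catalan n : ℚ) * (n.factorial * (n + 1).factorial) := by
    rw [← h2, ← h, Nat.factorial_succ]
    push_cast
    ring
  simp only [catGF, PowerSeries.coeff_mk, hc]
  have h1 : (n.factorial : ℚ) ≠ 0 := Nat.cast_ne_zero.mpr n.factorial_ne_zero
  have h1' : ((n + 1).factorial : ℚ) ≠ 0 := Nat.cast_ne_zero.mpr (n + 1).factorial_ne_zero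
  field_simp

lemma catGF_eq : catGF = 1 + PowerSeries.X * catGF ^ 2 := by
  ext n
  rw [map_add, coeff_catGF]
  cases n with
  | zero => simp [PowerSeries.coeff_zero_eq_constantCoeff]
  | succ m =>
    rw [PowerSeries.coeff_succ_X_mul, sq, PowerSeries.coeff_mul]
    simp only [coeff_catGF, PowerSeries.coeff_one, Nat.succ_ne_zero, if_false, zero_add]
    rw [catalan_succ']
    push_cast
    rfl

/-- `c(x)^3 = (1 - x·c(x)^2)·c'(x)` as formal power series. -/
theorem catGF_cube_eq : catGF ^ 3 = (1 - PowerSeries.X * catGF ^ 2) * catGF.derivativeFun := by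
  have h1 : PowerSeries.X * catGF ^ 2 = catGF - 1 := by
    nth_rewrite 2 [catGF_eq]
    ring
  have hd : catGF.derivativeFun = (1 + PowerSeries.X * catGF ^ 2).derivativeFun := by
    rw [← catGF_eq]
  rw [PowerSeries.derivativeFun_add, PowerSeries.derivativeFun_one,
    PowerSeries.derivativeFun_mul, sq, PowerSeries.derivativeFun_mul] at hd
  have hdX : (PowerSeries.X : PowerSeries ℚ).derivativeFun = 1 := by
    have := PowerSeries.derivative_X (R := ℚ)
    exact this
  simp only [hdX, smul_eq_mul, mul_one, zero_add] at hd
  have h2 : catGF.derivativeFun * (1 - 2 * PowerSeries.X * catGF) = catGF ^ 2 := by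
    linear_combination hd
  linear_combination (-catGF.derivativeFun) * h1 + (-catGF) * h2
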